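/- For every natural number N ≥ 1, the series ∑_{n=N³+1}^{∞} (n+1)·(1 − 1/N)^n converges and satisfies ∑_{n=N³+1}^{∞} (n+1)·(1 − 1/N)^n ≤ e^{−N²}·(N²+1)². -/

import Mathlib

/-- For every `N ≥ 1`, `∑_{n=N³+1}^∞ (n+1)(1 - 1/N)^n` converges and is at most
`e^{-N²} (N²+1)²`. -/
theorem stmt_11 (N : ℕ) (hN : 1 ≤ N) :
    Summable (fun n : ℕ => (((n + N ^ 3 + 1 : ℕ) : ℝ) + 1) * (1 - 1 / (N : ℝ)) ^ (n + N ^ 3 + 1)) ∧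
    ∑' n : ℕ, (((n + N ^ 3 + 1 : ℕ) : ℝ) + 1) * (1 - 1 / (N : ℝ)) ^ (n + N ^ 3 + 1)
      ≤ Real.exp (-(N : ℝ) ^ 2) * ((N : ℝ) ^ 2 + 1) ^ 2 := by
  have hN0 : (0:ℝ) < (N:ℝ) := by exact_mod_cast Nat.pos_of_ne_zero (by omega)
  set a : ℝ := (N:ℝ) with ha
  have ha1 : 1 ≤ a := by rw [ha]; exact_mod_cast hN
  set r : ℝ := 1 - 1/a with hr
  have hr0 : 0 ≤ r := by
    have : 1/a ≤ 1 := by rw [div_le_one hN0]; exact ha1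
    simp only [hr]; linarith
  have hr1 : r < 1 := by
    have : 0 < 1/a := by positivity
    simp only [hr]; linarith
  have hrn : ‖r‖ < 1 := by rw [Real.norm_eq_abs, abs_of_nonneg hr0]; exact hr1
  have hs1 : HasSum (fun n : ℕ => (n:ℝ) * r ^ n) (r / (1 - r) ^ 2) :=
    hasSum_coe_mul_geometric_of_norm_lt_one hrn
  have hs2 : HasSum (fun n : ℕ => r ^ n) (1 - r)⁻¹ := hasSum_geometric_of_norm_lt_one hrn
  have key : ∀ n : ℕ, (((n + N ^ 3 + 1 : ℕ) : ℝ) + 1) * r ^ (n + N ^ 3 + 1)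
      = r ^ (N ^ 3 + 1) * ((n:ℝ) * r ^ n) + (r ^ (N ^ 3 + 1) * ((a:ℝ) ^ 3 + 2)) * r ^ n := by
    intro n
    rw [show n + N ^ 3 + 1 = n + (N ^ 3 + 1) from by ring, pow_add]
    push_cast
    ring
  have hsum : Summable (fun n : ℕ => (((n + N ^ 3 + 1 : ℕ) : ℝ) + 1) * r ^ (n + N ^ 3 + 1)) := by
    apply Summable.congr (((hs1.summable.mul_left (r ^ (N ^ 3 + 1))).add
      (hs2.summable.mul_left (r ^ (N ^ 3 + 1) * ((a:ℝ) ^ 3 + 2)))))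
    intro n; exact (key n).symm
  refine ⟨hsum, ?_⟩
  have htsum : ∑' n : ℕ, (((n + N ^ 3 + 1 : ℕ) : ℝ) + 1) * r ^ (n + N ^ 3 + 1)
      = r ^ (N ^ 3 + 1) * (r / (1 - r) ^ 2)
        + (r ^ (N ^ 3 + 1) * ((a:ℝ) ^ 3 + 2)) * (1 - r)⁻¹ := by
    rw [tsum_congr key]
    rw [((hs1.mul_left (r ^ (N ^ 3 + 1))).add
      (hs2.mul_left (r ^ (N ^ 3 + 1) * ((a:ℝ) ^ 3 + 2)))).tsum_eq]
  rw [htsum]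
  have h1r : 1 - r = 1/a := by simp [hr]
  have hexp : r ^ (N ^ 3) ≤ Real.exp (-(a ^ 2)) := by
    have h1 : r ≤ Real.exp (-(1/a)) := by
      have := Real.add_one_le_exp (-(1/a)); simp only [hr]; linarith
    calc r ^ (N ^ 3) ≤ Real.exp (-(1/a)) ^ (N ^ 3) := pow_le_pow_left₀ hr0 h1 _
      _ = Real.exp (((N ^ 3 : ℕ) : ℝ) * (-(1/a))) := by rw [← Real.exp_nat_mul]
      _ = Real.exp (-(a ^ 2)) := by
          congr 1
          push_cast
          field_simp
          ring
  have hra : r * a = a - 1 := by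
    rw [hr, sub_mul, one_div, inv_mul_cancel₀ hN0.ne', one_mul]
  have hV : r ^ (N ^ 3 + 1) * (r / (1 - r) ^ 2)
        + (r ^ (N ^ 3 + 1) * ((a:ℝ) ^ 3 + 2)) * (1 - r)⁻¹
      = r ^ (N ^ 3) * ((r * a) ^ 2 + (r * a) * (a ^ 3 + 2)) := by
    rw [h1r, pow_succ]
    field_simp
  rw [hV, hra]
  have hfac : (a - 1) ^ 2 + (a - 1) * (a ^ 3 + 2) ≤ (a ^ 2 + 1) ^ 2 := by nlinarith
  have hfac0 : 0 ≤ (a - 1) ^ 2 + (a - 1) * (a ^ 3 + 2) := by nlinarith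
  calc r ^ (N ^ 3) * ((a - 1) ^ 2 + (a - 1) * (a ^ 3 + 2))
      ≤ Real.exp (-(a ^ 2)) * ((a - 1) ^ 2 + (a - 1) * (a ^ 3 + 2)) :=
        mul_le_mul_of_nonneg_right hexp hfac0
    _ ≤ Real.exp (-(a ^ 2)) * (a ^ 2 + 1) ^ 2 :=
        mul_le_mul_of_nonneg_left hfac (Real.exp_pos _).le
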